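/- Let λ, μ ∈ ℝ and let H : (Fin 3)⁶ → ℝ be a sixth-order tensor satisfying the symmetries H_{ijklmn} = H_{ikjlmn} = H_{ijklnm} = H_{lmnijk}. For every smooth, compactly supported u : ℝ³ → ℝ³ and every smooth, compactly supported ν̃ : ℝ³ → (Fin 3)³ → ℝ with ν̃(x) a symmetric triadic for every x, the following energy identity holds: ∫_{ℝ³} Σ_k u_k · [−(Δ*·u)_k + Σ_{i,j} ∂_i∂_j (H⫶ν̃)_{ijk}] dx + ∫_{ℝ³} Σ_{i,j,k} ν̃_{ijk} · [−(H⫶∇e(u))_{ijk} + (H⫶ν̃)_{ijk}] dx = ∫_{ℝ³} [2μ Σ_{j,k} e_{jk}(u)² + λ (div u)²] dx + ∫_{ℝ³} Σ ν̃_{ijk} H_{ijklmn} ν̃_{lmn} dx. -/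

import Mathlib

open MeasureTheory

noncomputable section

/-- Points of `ℝ³`. -/
abbrev V : Type := Fin 3 → ℝ

/-- `i`-th partial derivative of a scalar field on `ℝ³`. -/
noncomputable def pd (i : Fin 3) (f : V → ℝ) : V → ℝ :=
  fun x => fderiv ℝ f x (Pi.single i 1)

/-- Divergence of a vector field. -/
noncomputable def divg (u : V → V) : V → ℝ :=
  fun x => ∑ j : Fin 3, pd j (fun y => u y j) x

/-- Componentwise Laplacian of a vector field. -/
noncomputable def vlap (u : V → V) (k : Fin 3) : V → ℝ :=
  fun x => ∑ j : Fin 3, pd j (pd j (fun y => u y k)) x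

/-- The strain tensor `e_{jk}(u) = ½(∂_j u_k + ∂_k u_j)`. -/
noncomputable def strain (u : V → V) (j k : Fin 3) : V → ℝ :=
  fun x => (1/2) * (pd j (fun y => u y k) x + pd k (fun y => u y j) x)

/-- The Lamé (Navier) operator `(Δ*·u)_k = μ (Δu)_k + (λ+μ) ∂_k (div u)`. -/
noncomputable def navier (lam mu : ℝ) (u : V → V) (k : Fin 3) : V → ℝ :=
  fun x => mu * vlap u k x + (lam + mu) * pd k (divg u) x

/-- The gradient of the strain, `(∇e(u))_{ijk} = ∂_i e_{jk}(u)`. -/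
noncomputable def gradStrain (u : V → V) (i j k : Fin 3) : V → ℝ :=
  pd i (strain u j k)

/-- Contraction of a sixth order tensor with a triadic:
`(H⫶κ)_{ijk} = Σ_{l,m,n} H_{ijklmn} κ_{lmn}`. -/
def Hcontr (H : Fin 3 → Fin 3 → Fin 3 → Fin 3 → Fin 3 → Fin 3 → ℝ)
    (κ : Fin 3 → Fin 3 → Fin 3 → ℝ) (i j k : Fin 3) : ℝ :=
  ∑ l : Fin 3, ∑ m : Fin 3, ∑ n : Fin 3, H i j k l m n * κ l m n

/-- A triadic is symmetric if it is symmetric in its last two indices. -/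
def SymTriadic (κ : Fin 3 → Fin 3 → Fin 3 → ℝ) : Prop :=
  ∀ i j k, κ i j k = κ i k j

/-- The symmetries `H_{ijklmn} = H_{ikjlmn} = H_{ijklnm} = H_{lmnijk}`. -/
def Hsym (H : Fin 3 → Fin 3 → Fin 3 → Fin 3 → Fin 3 → Fin 3 → ℝ) : Prop :=
  ∀ i j k l m n, H i j k l m n = H i k j l m n ∧
    H i j k l m n = H i j k l n m ∧ H i j k l m n = H l m n i j k

/-- Positivity of `H` with constant `α` on symmetric triadics. -/
def Hpos (H : Fin 3 → Fin 3 → Fin 3 → Fin 3 → Fin 3 → Fin 3 → ℝ) (α : ℝ) : Prop :=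
  ∀ κ : Fin 3 → Fin 3 → Fin 3 → ℝ, SymTriadic κ →
    α * (∑ i : Fin 3, ∑ j : Fin 3, ∑ k : Fin 3, (κ i j k)^2) ≤
      ∑ i : Fin 3, ∑ j : Fin 3, ∑ k : Fin 3, ∑ l : Fin 3, ∑ m : Fin 3, ∑ n : Fin 3,
        κ i j k * H i j k l m n * κ l m n

/-- The double stress tensor of Mindlin Form II gradient elasticity with constitutive
parameters `a₁,…,a₅`. -/
noncomputable def dstress (a1 a2 a3 a4 a5 : ℝ) (u : V → V) (i j k : Fin 3) : V → ℝ :=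
  fun x =>
    (1/2) * a1 * ((if j = k then (1:ℝ) else 0) * vlap u i x
      + (if i = j then (1:ℝ) else 0) * pd k (divg u) x
      + (if j = k then (1:ℝ) else 0) * pd i (divg u) x
      + (if i = k then (1:ℝ) else 0) * pd j (divg u) x)
    + 2 * a2 * (if j = k then (1:ℝ) else 0) * pd i (divg u) x
    + (1/2) * a3 * ((if i = j then (1:ℝ) else 0) * vlap u k x
      + (if i = j then (1:ℝ) else 0) * pd k (divg u) x
      + (if i = k then (1:ℝ) else 0) * vlap u j x
      + (if i = k then (1:ℝ) else 0) * pd j (divg u) x)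
    + a4 * (pd i (pd j (fun y => u y k)) x + pd i (pd k (fun y => u y j)) x)
    + (1/2) * a5 * (2 * pd j (pd k (fun y => u y i)) x
      + pd i (pd j (fun y => u y k)) x + pd i (pd k (fun y => u y j)) x)
/-! ### Auxiliary infrastructure for the proof -/

section EnergyAux

open Finset

/-- Smooth and compactly supported. -/
def Nice (f : V → ℝ) : Prop := ContDiff ℝ (⊤:ℕ∞) f ∧ HasCompactSupport f

lemma Nice.pd {f : V → ℝ} (h : Nice f) (i : Fin 3) : Nice (pd i f) :=
  ⟨(h.1.fderiv_right (m := (⊤:ℕ∞)) (le_of_eq (by simp))).clm_apply contDiff_const,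
    h.2.fderiv_apply (𝕜 := ℝ) (Pi.single i 1)⟩

lemma Nice.mul {f g : V → ℝ} (hf : Nice f) (hg : Nice g) :
    Nice (fun x => f x * g x) :=
  ⟨hf.1.mul hg.1, (hf.2.mul_right : HasCompactSupport (f * g))⟩

lemma Nice.add {f g : V → ℝ} (hf : Nice f) (hg : Nice g) :
    Nice (fun x => f x + g x) := ⟨hf.1.add hg.1, hf.2.add hg.2⟩

lemma Nice.neg {f : V → ℝ} (hf : Nice f) : Nice (fun x => -(f x)) :=
  ⟨hf.1.neg, (HasCompactSupport.neg hf.2 : HasCompactSupport (-f))⟩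

lemma Nice.const_mul {f : V → ℝ} (hf : Nice f) (c : ℝ) :
    Nice (fun x => c * f x) :=
  ⟨contDiff_const.mul hf.1, (hf.2.mul_left : HasCompactSupport (_ * f))⟩

lemma Nice.sum {α : Type*} {s : Finset α} {F : α → V → ℝ}
    (h : ∀ j ∈ s, Nice (F j)) : Nice (fun x => ∑ j ∈ s, F j x) := by
  classical
  induction s using Finset.induction_on with
  | empty => exact ⟨by simpa using contDiff_const, by
      simp only [Finset.sum_empty]; exact HasCompactSupport.zero⟩
  | @insert a s' hj ih =>
    have e : (fun x => ∑ j ∈ insert a s', F j x)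
        = fun x => F a x + ∑ j ∈ s', F j x := by
      funext x; rw [Finset.sum_insert hj]
    rw [e]
    exact (h a (Finset.mem_insert_self a s')).add
      (ih (fun j hjs => h j (Finset.mem_insert_of_mem hjs)))

lemma Nice.integrable {f : V → ℝ} (h : Nice f) : MeasureTheory.Integrable f :=
  h.1.continuous.integrable_of_hasCompactSupport h.2

lemma pd_mul {f g : V → ℝ} (hf : Nice f) (hg : Nice g) (i : Fin 3) (x : V) :
    pd i (fun y => f y * g y) x = pd i f x * g x + f x * pd i g x := by
  have hdf : DifferentiableAt ℝ f x := (hf.1.differentiable (by simp)) x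
  have hdg : DifferentiableAt ℝ g x := (hg.1.differentiable (by simp)) x
  simp only [pd]
  rw [fderiv_fun_mul hdf hdg]
  simp only [ContinuousLinearMap.add_apply, ContinuousLinearMap.smul_apply, smul_eq_mul]
  ring

lemma pd_add {f g : V → ℝ} (hf : Nice f) (hg : Nice g) (i : Fin 3) (x : V) :
    pd i (fun y => f y + g y) x = pd i f x + pd i g x := by
  simp only [pd]
  rw [fderiv_fun_add ((hf.1.differentiable (by simp)) x)
    ((hg.1.differentiable (by simp)) x)]
  simp

lemma pd_const_mul {f : V → ℝ} (hf : Nice f) (c : ℝ) (i : Fin 3) (x : V) :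
    pd i (fun y => c * f y) x = c * pd i f x := by
  simp only [pd]
  rw [fderiv_const_mul ((hf.1.differentiable (by simp)) x) c]
  simp

lemma pd_sum {α : Type*} (s : Finset α) (F : α → V → ℝ) (h : ∀ j ∈ s, Nice (F j))
    (i : Fin 3) (x : V) :
    pd i (fun y => ∑ j ∈ s, F j y) x = ∑ j ∈ s, pd i (F j) x := by
  simp only [pd]
  rw [fderiv_fun_sum (fun j hj => ((h j hj).1.differentiable (by simp)) x)]
  simp

lemma pd_comm {f : V → ℝ} (hf : Nice f) (i j : Fin 3) (x : V) :
    pd i (pd j f) x = pd j (pd i f) x := by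
  have hs : IsSymmSndFDerivAt ℝ f x :=
    ContDiffAt.isSymmSndFDerivAt hf.1.contDiffAt (by simp; exact WithTop.coe_le_coe.mpr le_top)
  have h1 : ∀ (v w : V), fderiv ℝ (fun y => fderiv ℝ f y v) x w
      = fderiv ℝ (fderiv ℝ f) x w v := by
    intro v w
    rw [fderiv_clm_apply
      ((hf.1.fderiv_right (m := (⊤:ℕ∞)) (le_of_eq (by simp))).differentiable
        (by simp) x)
      (differentiableAt_const _)]
    simp
  show fderiv ℝ (fun y => fderiv ℝ f y (Pi.single j 1)) x (Pi.single i 1)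
    = fderiv ℝ (fun y => fderiv ℝ f y (Pi.single i 1)) x (Pi.single j 1)
  rw [h1, h1, hs (Pi.single j 1) (Pi.single i 1)]

lemma pd_eq_zero_of_nmem {f : V → ℝ} {x : V} (hx : x ∉ tsupport f) (i : Fin 3) :
    pd i f x = 0 := by
  have : fderiv ℝ f x = 0 := by
    by_contra h
    exact hx (support_fderiv_subset ℝ (Function.mem_support.mpr h))
  simp [pd, this]

lemma integral_pd (i : Fin 3) (g : V → ℝ) (hg : Nice g) : ∫ x : V, pd i g x = 0 := by
  classical
  obtain ⟨R, hR0, hR⟩ := hg.2.isBounded.subset_ball_lt 0 0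
  set a : V := fun _ => -R with ha
  set b : V := fun _ => R with hb
  have hab : a ≤ b := fun j => by simp [ha, hb]; linarith
  set F : Fin 3 → V → ℝ := fun j x => if j = i then g x else 0 with hF
  set F' : Fin 3 → V → V →L[ℝ] ℝ := fun j x => if j = i then fderiv ℝ g x else 0 with hF'
  have hsum : ∀ x : V, (∑ j : Fin 3, F' j x (Pi.single j 1)) = pd i g x := by
    intro x
    rw [Finset.sum_eq_single i] <;> simp [hF', pd]
    intro j hj; simp [hj]
  have key := integral_divergence_of_hasFDerivAt_off_countable' a b hab F F' ∅
    Set.countable_empty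
    (fun j => by
      by_cases h : j = i <;> simp [hF, h]
      exact (hg.1.continuous.continuousOn)
      exact continuousOn_const)
    (fun x _ j => by
      by_cases h : j = i <;> simp [hF, hF', h]
      · exact (hg.1.differentiable (by simp)) x |>.hasFDerivAt
      · exact hasFDerivAt_const 0 x)
    (by
      apply (ContinuousOn.integrableOn_compact isCompact_Icc)
      apply Continuous.continuousOn
      have e : (fun x : V => ∑ j : Fin 3, F' j x (Pi.single j 1)) = pd i g := funext hsum
      rw [e]
      exact ((hg.1.fderiv_right (m := (⊤:ℕ∞)) (le_of_eq (by simp))).clm_apply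
        contDiff_const).continuous)
  have hbd : ∀ (j : Fin 3) (c : ℝ), |c| = R → ∀ x : Fin 2 → ℝ,
      F j (Fin.insertNth (α := fun _ => ℝ) j c x) = 0 := by
    intro j c hc x
    by_cases h : j = i
    · subst h
      simp only [hF, if_pos rfl]
      apply image_eq_zero_of_notMem_tsupport
      intro hmem
      have hlt := hR hmem
      simp only [Metric.mem_ball, dist_zero_right] at hlt
      have h2 : |(Fin.insertNth (α := fun _ => ℝ) j c x) j| ≤
          ‖Fin.insertNth (α := fun _ => ℝ) j c x‖ := by
        simpa [Real.norm_eq_abs] using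
          norm_le_pi_norm (Fin.insertNth (α := fun _ => ℝ) j c x) j
      rw [Fin.insertNth_apply_same] at h2
      rw [hc] at h2
      linarith
    · simp [hF, h]
  simp only [hsum] at key
  have hzero : ∀ (j : Fin 3),
      ((∫ (x : Fin 2 → ℝ) in Set.Icc (a ∘ j.succAbove) (b ∘ j.succAbove),
          F j (j.insertNth (b j) x)) -
        ∫ (x : Fin 2 → ℝ) in Set.Icc (a ∘ j.succAbove) (b ∘ j.succAbove),
          F j (j.insertNth (a j) x)) = 0 := by
    intro j
    have h1 : ∀ x : Fin 2 → ℝ, F j (j.insertNth (b j) x) = 0 := fun x =>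
      hbd j (b j) (by rw [hb]; exact abs_of_pos hR0) x
    have h2 : ∀ x : Fin 2 → ℝ, F j (j.insertNth (a j) x) = 0 := fun x =>
      hbd j (a j) (by rw [ha]; rw [abs_neg]; exact abs_of_pos hR0) x
    simp only [h1, h2, MeasureTheory.integral_zero, sub_zero]
  rw [Finset.sum_congr rfl (fun j _ => hzero j), Finset.sum_const, smul_zero] at key
  rw [← key]
  symm
  apply MeasureTheory.setIntegral_eq_integral_of_forall_compl_eq_zero
  intro x hx
  apply pd_eq_zero_of_nmem
  intro hmem
  apply hx
  have hlt := hR hmem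
  simp only [Metric.mem_ball, dist_zero_right] at hlt
  constructor <;> intro j <;>
    have h2 : |x j| ≤ ‖x‖ := by simpa [Real.norm_eq_abs] using norm_le_pi_norm x j
  · simp only [ha]; cases abs_le.mp (le_of_lt (lt_of_le_of_lt h2 hlt)); linarith
  · simp only [hb]; cases abs_le.mp (le_of_lt (lt_of_le_of_lt h2 hlt)); linarith

/-- Integration by parts. -/
lemma ibp (i : Fin 3) {f g : V → ℝ} (hf : Nice f) (hg : Nice g) :
    ∫ x : V, pd i f x * g x = - ∫ x : V, f x * pd i g x := by
  have h0 := integral_pd i (fun x => f x * g x) (hf.mul hg)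
  have heq : (fun x : V => pd i (fun y => f y * g y) x)
      = fun x => pd i f x * g x + f x * pd i g x := funext (pd_mul hf hg i)
  rw [heq] at h0
  rw [MeasureTheory.integral_add ((hf.pd i).mul hg).integrable
    (hf.mul (hg.pd i)).integrable] at h0
  linarith

/-- Integration by parts, second form. -/
lemma ibp2 (i : Fin 3) {f g : V → ℝ} (hf : Nice f) (hg : Nice g) :
    ∫ x : V, f x * pd i g x = - ∫ x : V, pd i f x * g x := by
  have := ibp i hf hg; linarith

/-! ### Finite sum algebra -/

lemma sum3_prod (f : Fin 3 → Fin 3 → Fin 3 → ℝ) :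
    (∑ i : Fin 3, ∑ j : Fin 3, ∑ k : Fin 3, f i j k)
      = ∑ p : Fin 3 × Fin 3 × Fin 3, f p.1 p.2.1 p.2.2 := by
  rw [Fintype.sum_prod_type]
  congr 1; funext i
  rw [Fintype.sum_prod_type]

lemma contr_expand (H : Fin 3 → Fin 3 → Fin 3 → Fin 3 → Fin 3 → Fin 3 → ℝ)
    (κ τ : Fin 3 → Fin 3 → Fin 3 → ℝ) :
    (∑ i : Fin 3, ∑ j : Fin 3, ∑ k : Fin 3, κ i j k * Hcontr H τ i j k)
    = ∑ p : (Fin 3 × Fin 3 × Fin 3) × Fin 3 × Fin 3 × Fin 3,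
        κ p.1.1 p.1.2.1 p.1.2.2 * H p.1.1 p.1.2.1 p.1.2.2 p.2.1 p.2.2.1 p.2.2.2
          * τ p.2.1 p.2.2.1 p.2.2.2 := by
  rw [Fintype.sum_prod_type, sum3_prod]
  apply Finset.sum_congr rfl
  intro p _
  unfold Hcontr
  rw [← sum3_prod (f := fun l m n =>
    κ p.1 p.2.1 p.2.2 * H p.1 p.2.1 p.2.2 l m n * τ l m n)]
  simp only [Finset.mul_sum]
  exact Finset.sum_congr rfl fun l _ => Finset.sum_congr rfl fun m _ =>
    Finset.sum_congr rfl fun n _ => by ring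

lemma contr_flip (H : Fin 3 → Fin 3 → Fin 3 → Fin 3 → Fin 3 → Fin 3 → ℝ) (hH : Hsym H)
    (κ τ : Fin 3 → Fin 3 → Fin 3 → ℝ) :
    (∑ i : Fin 3, ∑ j : Fin 3, ∑ k : Fin 3, κ i j k * Hcontr H τ i j k)
    = ∑ i : Fin 3, ∑ j : Fin 3, ∑ k : Fin 3, τ i j k * Hcontr H κ i j k := by
  rw [contr_expand, contr_expand]
  apply Fintype.sum_equiv (Equiv.prodComm _ _)
  intro p
  simp only [Equiv.prodComm_apply, Prod.snd_swap, Prod.fst_swap]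
  rw [(hH p.2.1 p.2.2.1 p.2.2.2 p.1.1 p.1.2.1 p.1.2.2).2.2]
  ring

lemma Hcontr_symm23 {H : Fin 3 → Fin 3 → Fin 3 → Fin 3 → Fin 3 → Fin 3 → ℝ} (hH : Hsym H)
    (κ : Fin 3 → Fin 3 → Fin 3 → ℝ) (i j k : Fin 3) :
    Hcontr H κ i j k = Hcontr H κ i k j := by
  unfold Hcontr
  exact Finset.sum_congr rfl fun l _ => Finset.sum_congr rfl fun m _ =>
    Finset.sum_congr rfl fun n _ => by rw [(hH i j k l m n).1]

lemma sym_half (A W : Fin 3 → Fin 3 → Fin 3 → ℝ) (hW : ∀ i j k, W i j k = W i k j) :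
    (∑ i : Fin 3, ∑ j : Fin 3, ∑ k : Fin 3, (1/2) * (A i j k + A i k j) * W i j k)
    = ∑ i : Fin 3, ∑ j : Fin 3, ∑ k : Fin 3, A i j k * W i j k := by
  have swap : (∑ i : Fin 3, ∑ j : Fin 3, ∑ k : Fin 3, A i k j * W i j k)
      = ∑ i : Fin 3, ∑ j : Fin 3, ∑ k : Fin 3, A i j k * W i j k := by
    apply Finset.sum_congr rfl; intro i _
    rw [Finset.sum_comm]
    exact Finset.sum_congr rfl fun j _ => Finset.sum_congr rfl fun k _ => by
      rw [hW i j k]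
  have h1 : ∀ i j k : Fin 3, (1/2) * (A i j k + A i k j) * W i j k
      = (1/2) * (A i j k * W i j k) + (1/2) * (A i k j * W i j k) := by
    intros; ring
  simp only [h1, Finset.sum_add_distrib, ← Finset.mul_sum]
  rw [swap]; ring

lemma sum_comm3 (f : Fin 3 → Fin 3 → Fin 3 → ℝ) :
    (∑ k : Fin 3, ∑ i : Fin 3, ∑ j : Fin 3, f k i j)
      = ∑ i : Fin 3, ∑ j : Fin 3, ∑ k : Fin 3, f k i j := by
  rw [Finset.sum_comm]
  exact Finset.sum_congr rfl fun i _ => Finset.sum_comm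

lemma integral_triple_sum (F : Fin 3 → Fin 3 → Fin 3 → V → ℝ)
    (h : ∀ i j k, Nice (F i j k)) :
    (∫ x : V, ∑ i : Fin 3, ∑ j : Fin 3, ∑ k : Fin 3, F i j k x)
      = ∑ i : Fin 3, ∑ j : Fin 3, ∑ k : Fin 3, ∫ x : V, F i j k x := by
  rw [MeasureTheory.integral_finset_sum _ (fun i _ =>
    (Nice.sum fun j _ => Nice.sum fun k _ => h i j k).integrable)]
  refine Finset.sum_congr rfl fun i _ => ?_
  rw [MeasureTheory.integral_finset_sum _ (fun j _ =>
    (Nice.sum fun k _ => h i j k).integrable)]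
  exact Finset.sum_congr rfl fun j _ =>
    MeasureTheory.integral_finset_sum _ (fun k _ => (h i j k).integrable)

lemma integral_double_sum (F : Fin 3 → Fin 3 → V → ℝ)
    (h : ∀ j k, Nice (F j k)) :
    (∫ x : V, ∑ j : Fin 3, ∑ k : Fin 3, F j k x)
      = ∑ j : Fin 3, ∑ k : Fin 3, ∫ x : V, F j k x := by
  rw [MeasureTheory.integral_finset_sum _ (fun j _ =>
    (Nice.sum fun k _ => h j k).integrable)]
  exact Finset.sum_congr rfl fun j _ =>
    MeasureTheory.integral_finset_sum _ (fun k _ => (h j k).integrable)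

end EnergyAux
/-- the energy identity for the second order operator `A₋` on smooth compactly
supported fields. -/
theorem energy_identity
    (lam mu : ℝ) (H : Fin 3 → Fin 3 → Fin 3 → Fin 3 → Fin 3 → Fin 3 → ℝ) (hH : Hsym H)
    (u : V → V) (ν : V → Fin 3 → Fin 3 → Fin 3 → ℝ)
    (hu : ContDiff ℝ (⊤ : ℕ∞) u) (hν : ContDiff ℝ (⊤ : ℕ∞) ν)
    (huc : HasCompactSupport u) (hνc : HasCompactSupport ν)
    (hsym : ∀ x, SymTriadic (ν x)) :
    (∫ x : V, ∑ k : Fin 3, u x k *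
        (-(navier lam mu u k x)
          + ∑ i : Fin 3, ∑ j : Fin 3, pd i (pd j (fun y => Hcontr H (ν y) i j k)) x))
    + (∫ x : V, ∑ i : Fin 3, ∑ j : Fin 3, ∑ k : Fin 3, ν x i j k *
        (-(Hcontr H (fun l m n => gradStrain u l m n x) i j k) + Hcontr H (ν x) i j k))
    = (∫ x : V, (2 * mu * ∑ j : Fin 3, ∑ k : Fin 3, (strain u j k x)^2
          + lam * (divg u x)^2))
      + (∫ x : V, ∑ i : Fin 3, ∑ j : Fin 3, ∑ k : Fin 3, ∑ l : Fin 3, ∑ m : Fin 3, ∑ n : Fin 3,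
          ν x i j k * H i j k l m n * ν x l m n) := by
  classical
  have hUk : ∀ k : Fin 3, Nice (fun y => u y k) := fun k =>
    ⟨contDiff_pi.mp hu k, huc.comp_left (g := fun v : Fin 3 → ℝ => v k) rfl⟩
  have hNu : ∀ i j k : Fin 3, Nice (fun y => ν y i j k) := fun i j k =>
    ⟨contDiff_pi.mp (contDiff_pi.mp (contDiff_pi.mp hν i) j) k,
      hνc.comp_left (g := fun t : Fin 3 → Fin 3 → Fin 3 → ℝ => t i j k) rfl⟩
  have hW : ∀ i j k : Fin 3, Nice (fun y => Hcontr H (ν y) i j k) := fun i j k => by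
    show Nice (fun y => ∑ l : Fin 3, ∑ m : Fin 3, ∑ n : Fin 3, H i j k l m n * ν y l m n)
    exact Nice.sum fun l _ => Nice.sum fun m _ => Nice.sum fun n _ =>
      (hNu l m n).const_mul _
  have hDiv : Nice (divg u) := by
    show Nice (fun x => ∑ j : Fin 3, pd j (fun y => u y j) x)
    exact Nice.sum fun j _ => (hUk j).pd j
  have hStrain : ∀ j k : Fin 3, Nice (strain u j k) := fun j k => by
    show Nice (fun x => (1/2) * (pd j (fun y => u y k) x + pd k (fun y => u y j) x))
    exact (((hUk k).pd j).add ((hUk j).pd k)).const_mul (1/2)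
  have hGSN : ∀ l m n : Fin 3, Nice (gradStrain u l m n) := fun l m n =>
    (hStrain m n).pd l
  have hHGS : ∀ i j k : Fin 3,
      Nice (fun x => Hcontr H (fun l m n => gradStrain u l m n x) i j k) := fun i j k => by
    show Nice (fun x => ∑ l : Fin 3, ∑ m : Fin 3, ∑ n : Fin 3,
      H i j k l m n * gradStrain u l m n x)
    exact Nice.sum fun l _ => Nice.sum fun m _ => Nice.sum fun n _ =>
      (hGSN l m n).const_mul _
  have hVlap : ∀ k : Fin 3, Nice (fun x => vlap u k x) := fun k => by
    show Nice (fun x => ∑ j : Fin 3, pd j (pd j (fun y => u y k)) x)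
    exact Nice.sum fun j _ => ((hUk k).pd j).pd j
  have hNav : ∀ k : Fin 3, Nice (fun x => navier lam mu u k x) := fun k => by
    show Nice (fun x => mu * vlap u k x + (lam + mu) * pd k (divg u) x)
    exact ((hVlap k).const_mul mu).add ((hDiv.pd k).const_mul (lam + mu))
  have hpdDiv : ∀ (k : Fin 3) (x : V), pd k (divg u) x
      = ∑ j : Fin 3, pd k (pd j (fun y => u y j)) x := fun k x =>
    pd_sum Finset.univ (fun j => pd j (fun y => u y j)) (fun j _ => (hUk j).pd j) k x
  have hGS : ∀ (i j k : Fin 3) (x : V), gradStrain u i j k x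
      = (1/2) * (pd i (pd j (fun y => u y k)) x + pd i (pd k (fun y => u y j)) x) := by
    intro i j k x
    calc gradStrain u i j k x
        = pd i (fun y => (1/2) * (pd j (fun z => u z k) y + pd k (fun z => u z j) y)) x := rfl
      _ = (1/2) * pd i (fun y => pd j (fun z => u z k) y + pd k (fun z => u z j) y) x :=
          pd_const_mul (((hUk k).pd j).add ((hUk j).pd k)) (1/2) i x
      _ = (1/2) * (pd i (pd j (fun y => u y k)) x + pd i (pd k (fun y => u y j)) x) := by
          rw [pd_add ((hUk k).pd j) ((hUk j).pd k) i x]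
  have hA1N : Nice (fun x => ∑ k : Fin 3, u x k * (-(navier lam mu u k x))) :=
    Nice.sum fun k _ => (hUk k).mul ((hNav k).neg)
  have hA2N : Nice (fun x => ∑ k : Fin 3, ∑ i : Fin 3, ∑ j : Fin 3,
      u x k * pd i (pd j (fun y => Hcontr H (ν y) i j k)) x) :=
    Nice.sum fun k _ => Nice.sum fun i _ => Nice.sum fun j _ =>
      (hUk k).mul (((hW i j k).pd j).pd i)
  have hB1N : Nice (fun x => ∑ i : Fin 3, ∑ j : Fin 3, ∑ k : Fin 3,
      ν x i j k * Hcontr H (fun l m n => gradStrain u l m n x) i j k) :=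
    Nice.sum fun i _ => Nice.sum fun j _ => Nice.sum fun k _ =>
      (hNu i j k).mul (hHGS i j k)
  have hB2N : Nice (fun x => ∑ i : Fin 3, ∑ j : Fin 3, ∑ k : Fin 3,
      ν x i j k * Hcontr H (ν x) i j k) :=
    Nice.sum fun i _ => Nice.sum fun j _ => Nice.sum fun k _ =>
      (hNu i j k).mul (hW i j k)
  -- Split of the first integral
  have hsplit1 : (∫ x : V, ∑ k : Fin 3, u x k *
        (-(navier lam mu u k x)
          + ∑ i : Fin 3, ∑ j : Fin 3, pd i (pd j (fun y => Hcontr H (ν y) i j k)) x))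
      = (∫ x : V, ∑ k : Fin 3, u x k * (-(navier lam mu u k x)))
        + ∫ x : V, ∑ k : Fin 3, ∑ i : Fin 3, ∑ j : Fin 3,
            u x k * pd i (pd j (fun y => Hcontr H (ν y) i j k)) x := by
    rw [← MeasureTheory.integral_add hA1N.integrable hA2N.integrable]
    congr 1
    funext x
    rw [← Finset.sum_add_distrib]
    refine Finset.sum_congr rfl fun k _ => ?_
    rw [mul_add]
    congr 1
    rw [Finset.mul_sum]
    refine Finset.sum_congr rfl fun i _ => ?_
    rw [Finset.mul_sum]
  -- Push the second piece through the sums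
  have hA2sum : (∫ x : V, ∑ k : Fin 3, ∑ i : Fin 3, ∑ j : Fin 3,
        u x k * pd i (pd j (fun y => Hcontr H (ν y) i j k)) x)
      = ∑ k : Fin 3, ∑ i : Fin 3, ∑ j : Fin 3,
          ∫ x : V, u x k * pd i (pd j (fun y => Hcontr H (ν y) i j k)) x :=
    integral_triple_sum
      (fun k i j => fun x => u x k * pd i (pd j (fun y => Hcontr H (ν y) i j k)) x)
      (fun k i j => (hUk k).mul (((hW i j k).pd j).pd i))
  have hA2ibp : ∀ k i j : Fin 3,
      (∫ x : V, u x k * pd i (pd j (fun y => Hcontr H (ν y) i j k)) x)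
      = ∫ x : V, pd i (pd j (fun y => u y k)) x * Hcontr H (ν x) i j k := by
    intro k i j
    have s1 : (∫ x : V, u x k * pd i (pd j (fun y => Hcontr H (ν y) i j k)) x)
        = - ∫ x : V, pd i (fun y => u y k) x * pd j (fun y => Hcontr H (ν y) i j k) x :=
      ibp2 i (hUk k) ((hW i j k).pd j)
    have s2 : (∫ x : V, pd i (fun y => u y k) x * pd j (fun y => Hcontr H (ν y) i j k) x)
        = - ∫ x : V, pd j (pd i (fun y => u y k)) x * Hcontr H (ν x) i j k :=
      ibp2 j ((hUk k).pd i) (hW i j k)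
    rw [s1, s2, neg_neg]
    congr 1
    funext x
    rw [pd_comm (hUk k) j i x]
  have hB1eq : ∀ x : V,
      (∑ i : Fin 3, ∑ j : Fin 3, ∑ k : Fin 3, ν x i j k *
        Hcontr H (fun l m n => gradStrain u l m n x) i j k)
      = ∑ i : Fin 3, ∑ j : Fin 3, ∑ k : Fin 3,
          pd i (pd j (fun y => u y k)) x * Hcontr H (ν x) i j k := by
    intro x
    rw [contr_flip H hH (ν x) (fun l m n => gradStrain u l m n x)]
    have e1 : (∑ i : Fin 3, ∑ j : Fin 3, ∑ k : Fin 3,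
        gradStrain u i j k x * Hcontr H (ν x) i j k)
        = ∑ i : Fin 3, ∑ j : Fin 3, ∑ k : Fin 3,
          (1/2) * (pd i (pd j (fun y => u y k)) x + pd i (pd k (fun y => u y j)) x)
            * Hcontr H (ν x) i j k :=
      Finset.sum_congr rfl fun i _ => Finset.sum_congr rfl fun j _ =>
        Finset.sum_congr rfl fun k _ => by rw [hGS i j k x]
    rw [e1]
    exact sym_half (fun i j k => pd i (pd j (fun y => u y k)) x)
      (fun i j k => Hcontr H (ν x) i j k) (fun i j k => Hcontr_symm23 hH (ν x) i j k)
  have hB1int : (∫ x : V, ∑ i : Fin 3, ∑ j : Fin 3, ∑ k : Fin 3, ν x i j k *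
        Hcontr H (fun l m n => gradStrain u l m n x) i j k)
      = ∑ i : Fin 3, ∑ j : Fin 3, ∑ k : Fin 3,
          ∫ x : V, pd i (pd j (fun y => u y k)) x * Hcontr H (ν x) i j k := by
    rw [show (fun x : V => ∑ i : Fin 3, ∑ j : Fin 3, ∑ k : Fin 3, ν x i j k *
        Hcontr H (fun l m n => gradStrain u l m n x) i j k)
      = fun x : V => ∑ i : Fin 3, ∑ j : Fin 3, ∑ k : Fin 3,
          pd i (pd j (fun y => u y k)) x * Hcontr H (ν x) i j k from funext hB1eq]
    exact integral_triple_sum _ (fun i j k => (((hUk k).pd j).pd i).mul (hW i j k))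
  have hF2 : (∫ x : V, ∑ k : Fin 3, ∑ i : Fin 3, ∑ j : Fin 3,
        u x k * pd i (pd j (fun y => Hcontr H (ν y) i j k)) x)
      = ∫ x : V, ∑ i : Fin 3, ∑ j : Fin 3, ∑ k : Fin 3, ν x i j k *
          Hcontr H (fun l m n => gradStrain u l m n x) i j k := by
    rw [hA2sum, hB1int]
    rw [Finset.sum_congr rfl (fun k (_ : k ∈ Finset.univ) => Finset.sum_congr rfl
      (fun i _ => Finset.sum_congr rfl (fun j _ => hA2ibp k i j)))]
    exact sum_comm3
      (fun k i j => ∫ x : V, pd i (pd j (fun y => u y k)) x * Hcontr H (ν x) i j k)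
  -- the elastic part
  have hA1eq : (∫ x : V, ∑ k : Fin 3, u x k * (-(navier lam mu u k x)))
      = ∑ k : Fin 3, ((-mu) * ∑ j : Fin 3,
            (∫ x : V, u x k * pd j (pd j (fun y => u y k)) x)
          + (-(lam + mu)) * ∫ x : V, u x k * pd k (divg u) x) := by
    have e : (fun x : V => ∑ k : Fin 3, u x k * (-(navier lam mu u k x)))
        = fun x : V => ∑ k : Fin 3, ((-mu) * ∑ j : Fin 3,
              (u x k * pd j (pd j (fun y => u y k)) x)
            + (-(lam + mu)) * (u x k * pd k (divg u) x)) := by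
      funext x
      refine Finset.sum_congr rfl fun k _ => ?_
      have e2 : navier lam mu u k x
          = mu * (∑ j : Fin 3, pd j (pd j (fun y => u y k)) x)
            + (lam + mu) * pd k (divg u) x := rfl
      rw [e2, show (∑ j : Fin 3, u x k * pd j (pd j (fun y => u y k)) x)
          = u x k * ∑ j : Fin 3, pd j (pd j (fun y => u y k)) x from
        (Finset.mul_sum _ _ _).symm]
      ring
    rw [e]
    rw [MeasureTheory.integral_finset_sum _ (fun k _ => (((Nice.sum (fun j _ =>
      (hUk k).mul (((hUk k).pd j).pd j))).const_mul (-mu)).add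
      (((hUk k).mul (hDiv.pd k)).const_mul (-(lam + mu)))).integrable)]
    refine Finset.sum_congr rfl fun k _ => ?_
    rw [MeasureTheory.integral_add ((Nice.sum (fun j _ =>
      (hUk k).mul (((hUk k).pd j).pd j))).const_mul (-mu)).integrable
      (((hUk k).mul (hDiv.pd k)).const_mul (-(lam + mu))).integrable,
      MeasureTheory.integral_const_mul, MeasureTheory.integral_const_mul,
      MeasureTheory.integral_finset_sum _ (fun j _ =>
        ((hUk k).mul (((hUk k).pd j).pd j)).integrable)]
  have hI1 : ∀ k j : Fin 3, (∫ x : V, u x k * pd j (pd j (fun y => u y k)) x)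
      = - ∫ x : V, pd j (fun y => u y k) x * pd j (fun y => u y k) x := fun k j =>
    ibp2 j (hUk k) ((hUk k).pd j)
  have hI2 : ∀ k : Fin 3, (∫ x : V, u x k * pd k (divg u) x)
      = - ∫ x : V, pd k (fun y => u y k) x * divg u x := fun k =>
    ibp2 k (hUk k) hDiv
  have hdd : (∑ k : Fin 3, ∫ x : V, pd k (fun y => u y k) x * divg u x)
      = ∫ x : V, divg u x * divg u x := by
    rw [← MeasureTheory.integral_finset_sum _ (fun k _ =>
      (((hUk k).pd k).mul hDiv).integrable)]
    congr 1
    funext x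
    rw [← Finset.sum_mul]
    rfl
  have hA1final : (∑ k : Fin 3, ((-mu) * ∑ j : Fin 3,
        (∫ x : V, u x k * pd j (pd j (fun y => u y k)) x)
      + (-(lam + mu)) * ∫ x : V, u x k * pd k (divg u) x))
      = mu * (∑ k : Fin 3, ∑ j : Fin 3,
            ∫ x : V, pd j (fun y => u y k) x * pd j (fun y => u y k) x)
        + (lam + mu) * ∫ x : V, divg u x * divg u x := by
    rw [← hdd]
    simp only [hI1, hI2]
    simp only [Finset.sum_neg_distrib, mul_neg, neg_mul, neg_neg]
    rw [Finset.sum_add_distrib, ← Finset.mul_sum, ← Finset.mul_sum]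
  have hKibp : ∀ k j : Fin 3,
      (∫ x : V, pd j (fun y => u y k) x * pd k (fun y => u y j) x)
      = - ∫ x : V, u x k * pd k (pd j (fun y => u y j)) x := by
    intro k j
    have h1 : (∫ x : V, pd j (fun y => u y k) x * pd k (fun y => u y j) x)
        = - ∫ x : V, u x k * pd j (pd k (fun y => u y j)) x :=
      ibp j (hUk k) ((hUk j).pd k)
    rw [h1]
    congr 2
    funext x
    rw [pd_comm (hUk j) j k x]
  have hG2 : (∑ j : Fin 3, ∑ k : Fin 3,
      ∫ x : V, pd j (fun y => u y k) x * pd k (fun y => u y j) x)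
      = ∫ x : V, divg u x * divg u x := by
    rw [← hdd]
    rw [Finset.sum_comm]
    refine Finset.sum_congr rfl fun k _ => ?_
    rw [Finset.sum_congr rfl (fun j (_ : j ∈ Finset.univ) => hKibp k j)]
    rw [Finset.sum_neg_distrib]
    rw [← MeasureTheory.integral_finset_sum _ (fun j _ =>
      ((hUk k).mul (((hUk j).pd j).pd k)).integrable)]
    have e : (fun x : V => ∑ j : Fin 3, u x k * pd k (pd j (fun y => u y j)) x)
        = fun x : V => u x k * pd k (divg u) x := by
      funext x
      rw [← Finset.mul_sum, ← hpdDiv k x]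
    rw [e, hI2 k, neg_neg]
  have hsq : ∀ j k : Fin 3, (∫ x : V, strain u j k x * strain u j k x)
      = (1/4) * (∫ x : V, pd j (fun y => u y k) x * pd j (fun y => u y k) x)
        + (1/2) * (∫ x : V, pd j (fun y => u y k) x * pd k (fun y => u y j) x)
        + (1/4) * (∫ x : V, pd k (fun y => u y j) x * pd k (fun y => u y j) x) := by
    intro j k
    have e : (fun x : V => strain u j k x * strain u j k x)
        = fun x : V => (1/4) * (pd j (fun y => u y k) x * pd j (fun y => u y k) x)
            + ((1/2) * (pd j (fun y => u y k) x * pd k (fun y => u y j) x)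
            + (1/4) * (pd k (fun y => u y j) x * pd k (fun y => u y j) x)) := by
      funext x
      show ((1/2) * (pd j (fun y => u y k) x + pd k (fun y => u y j) x))
          * ((1/2) * (pd j (fun y => u y k) x + pd k (fun y => u y j) x)) = _
      ring
    rw [e, MeasureTheory.integral_add
        ((((hUk k).pd j).mul ((hUk k).pd j)).const_mul (1/4)).integrable
        (((((hUk k).pd j).mul ((hUk j).pd k)).const_mul (1/2)).add
          ((((hUk j).pd k).mul ((hUk j).pd k)).const_mul (1/4))).integrable,
      MeasureTheory.integral_add
        ((((hUk k).pd j).mul ((hUk j).pd k)).const_mul (1/2)).integrable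
        ((((hUk j).pd k).mul ((hUk j).pd k)).const_mul (1/4)).integrable,
      MeasureTheory.integral_const_mul, MeasureTheory.integral_const_mul,
      MeasureTheory.integral_const_mul]
    ring
  have hY1 : (∫ x : V, (2 * mu * ∑ j : Fin 3, ∑ k : Fin 3, (strain u j k x)^2
        + lam * (divg u x)^2))
      = mu * (∑ j : Fin 3, ∑ k : Fin 3,
            ∫ x : V, pd j (fun y => u y k) x * pd j (fun y => u y k) x)
        + mu * (∑ j : Fin 3, ∑ k : Fin 3,
            ∫ x : V, pd j (fun y => u y k) x * pd k (fun y => u y j) x)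
        + lam * ∫ x : V, divg u x * divg u x := by
    have e : (fun x : V => 2 * mu * ∑ j : Fin 3, ∑ k : Fin 3, (strain u j k x)^2
          + lam * (divg u x)^2)
        = fun x : V => (2*mu) * (∑ j : Fin 3, ∑ k : Fin 3, strain u j k x * strain u j k x)
            + lam * (divg u x * divg u x) := by
      funext x
      simp only [pow_two]
    rw [e]
    rw [MeasureTheory.integral_add (((Nice.sum fun j _ => Nice.sum fun k _ =>
        (hStrain j k).mul (hStrain j k)).const_mul (2*mu)).integrable)
      ((hDiv.mul hDiv).const_mul lam).integrable,
      MeasureTheory.integral_const_mul, MeasureTheory.integral_const_mul,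
      integral_double_sum _ (fun j k => (hStrain j k).mul (hStrain j k))]
    rw [Finset.sum_congr rfl (fun j (_ : j ∈ Finset.univ) => Finset.sum_congr rfl
      (fun k _ => hsq j k))]
    have hIsym : (∑ j : Fin 3, ∑ k : Fin 3,
        ∫ x : V, pd k (fun y => u y j) x * pd k (fun y => u y j) x)
        = ∑ j : Fin 3, ∑ k : Fin 3,
          ∫ x : V, pd j (fun y => u y k) x * pd j (fun y => u y k) x :=
      Finset.sum_comm
    simp only [Finset.sum_add_distrib, ← Finset.mul_sum]
    rw [hIsym]
    ring
  have hY2 : (∫ x : V, ∑ i : Fin 3, ∑ j : Fin 3, ∑ k : Fin 3, ∑ l : Fin 3, ∑ m : Fin 3,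
        ∑ n : Fin 3, ν x i j k * H i j k l m n * ν x l m n)
      = ∫ x : V, ∑ i : Fin 3, ∑ j : Fin 3, ∑ k : Fin 3,
          ν x i j k * Hcontr H (ν x) i j k := by
    congr 1
    funext x
    refine Finset.sum_congr rfl fun i _ => Finset.sum_congr rfl fun j _ =>
      Finset.sum_congr rfl fun k _ => ?_
    unfold Hcontr
    simp only [Finset.mul_sum]
    exact Finset.sum_congr rfl fun l _ => Finset.sum_congr rfl fun m _ =>
      Finset.sum_congr rfl fun n _ => (mul_assoc _ _ _)
  have hsplit2 : (∫ x : V, ∑ i : Fin 3, ∑ j : Fin 3, ∑ k : Fin 3, ν x i j k *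
        (-(Hcontr H (fun l m n => gradStrain u l m n x) i j k) + Hcontr H (ν x) i j k))
      = -(∫ x : V, ∑ i : Fin 3, ∑ j : Fin 3, ∑ k : Fin 3, ν x i j k *
          Hcontr H (fun l m n => gradStrain u l m n x) i j k)
        + ∫ x : V, ∑ i : Fin 3, ∑ j : Fin 3, ∑ k : Fin 3,
            ν x i j k * Hcontr H (ν x) i j k := by
    rw [← MeasureTheory.integral_neg,
      ← MeasureTheory.integral_add hB1N.neg.integrable hB2N.integrable]
    congr 1
    funext x
    simp only [mul_add, mul_neg, Finset.sum_add_distrib, Finset.sum_neg_distrib]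
  rw [hsplit1, hsplit2, hY2, hF2, hA1eq, hA1final, hY1]
  have hS1comm : (∑ k : Fin 3, ∑ j : Fin 3,
      ∫ x : V, pd j (fun y => u y k) x * pd j (fun y => u y k) x)
      = ∑ j : Fin 3, ∑ k : Fin 3,
        ∫ x : V, pd j (fun y => u y k) x * pd j (fun y => u y k) x :=
    Finset.sum_comm
  have hS2comm : (∑ j : Fin 3, ∑ k : Fin 3,
      ∫ x : V, pd j (fun y => u y k) x * pd k (fun y => u y j) x)
      = ∫ x : V, divg u x * divg u x := hG2
  rw [hS1comm, hS2comm]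
  ring
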